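/- Let 𝒞 be a triangulated category with suspension Σ, regarded as a left triangulated category with Ω = Σ⁻¹. A full subcategory 𝒳 ⊆ 𝒞 is d-cluster tilting in the sense of left triangulated categories (direct-summand closed, existence of (d+2)-angles, Ω-fullness/faithfulness, and Hom(Ω^iX', X) = 0 for 1 ≤ i ≤ d−1) if and only if 𝒳 is d-cluster tilting in the usual triangulated sense (functorially finite and 𝒳 = {C : Hom(𝒳, Σ^iC) = 0, 1 ≤ i ≤ d−1} = {C : Hom(C, Σ^i𝒳) = 0, 1 ≤ i ≤ d−1}). -/

import Mathlib

open CategoryTheory CategoryTheory.Limits ZeroObject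

universe w w' v u

namespace Paper

variable (C : Type u) [Category.{v} C] [Preadditive C] [HasZeroObject C] [HasBinaryBiproducts C]

/-- A Quillen exact structure on an additive category: a class of distinguished
kernel-cokernel pairs (`ses f g` meaning `0 → X → Y → Z → 0` is a conflation)
satisfying the axioms of exact categories. -/
structure ExactStructure where
  ses : ∀ ⦃X Y Z : C⦄, (X ⟶ Y) → (Y ⟶ Z) → Prop
  comp_zero : ∀ ⦃X Y Z : C⦄ {f : X ⟶ Y} {g : Y ⟶ Z}, ses f g → f ≫ g = 0
  isKernel : ∀ ⦃X Y Z : C⦄ {f : X ⟶ Y} {g : Y ⟶ Z} (h : ses f g),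
      Nonempty (IsLimit (KernelFork.ofι f (comp_zero h)))
  isCokernel : ∀ ⦃X Y Z : C⦄ {f : X ⟶ Y} {g : Y ⟶ Z} (h : ses f g),
      Nonempty (IsColimit (CokernelCofork.ofπ g (comp_zero h)))
  ses_id_zero : ∀ X : C, ses (𝟙 X) (0 : X ⟶ 0)
  ses_zero_id : ∀ X : C, ses (0 : (0 : C) ⟶ X) (𝟙 X)
  ses_split : ∀ X Y : C, ses (biprod.inl : X ⟶ X ⊞ Y) (biprod.snd : X ⊞ Y ⟶ Y)
  infl_comp : ∀ ⦃X Y Z : C⦄ {f : X ⟶ Y} {g : Y ⟶ Z},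
      (∃ (U : C) (u : Y ⟶ U), ses f u) → (∃ (V : C) (v : Z ⟶ V), ses g v) →
      ∃ (W : C) (w : Z ⟶ W), ses (f ≫ g) w
  defl_comp : ∀ ⦃X Y Z : C⦄ {f : X ⟶ Y} {g : Y ⟶ Z},
      (∃ (U : C) (u : U ⟶ X), ses u f) → (∃ (V : C) (v : V ⟶ Y), ses v g) →
      ∃ (W : C) (w : W ⟶ X), ses w (f ≫ g)
  pushout_infl : ∀ ⦃X Y Z : C⦄ (f : X ⟶ Y) (g : X ⟶ Z),
      (∃ (U : C) (u : Y ⟶ U), ses f u) →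
      ∃ (W : C) (h : Y ⟶ W) (k : Z ⟶ W), (∃ (V : C) (v : W ⟶ V), ses k v) ∧ IsPushout f g h k
  pullback_defl : ∀ ⦃X Y Z : C⦄ (f : Y ⟶ X) (g : Z ⟶ X),
      (∃ (U : C) (u : U ⟶ Y), ses u f) →
      ∃ (W : C) (h : W ⟶ Y) (k : W ⟶ Z), (∃ (V : C) (v : V ⟶ W), ses v h) ∧ IsPullback h k f g

variable {C}

/-- Admissible monomorphisms. -/
def ExactStructure.Inflation (E : ExactStructure C) {X Y : C} (f : X ⟶ Y) : Prop :=
  ∃ (Z : C) (g : Y ⟶ Z), E.ses f g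

/-- Admissible epimorphisms. -/
def ExactStructure.Deflation (E : ExactStructure C) {Y Z : C} (g : Y ⟶ Z) : Prop :=
  ∃ (X : C) (f : X ⟶ Y), E.ses f g

/-- Projective objects with respect to an exact structure. -/
def ExactStructure.Proj (E : ExactStructure C) (P : C) : Prop :=
  ∀ ⦃Y Z : C⦄ (g : Y ⟶ Z), E.Deflation g → ∀ h : P ⟶ Z, ∃ k : P ⟶ Y, k ≫ g = h

/-- The exact category has enough projectives. -/
def EnoughProj (E : ExactStructure C) : Prop :=
  ∀ X : C, ∃ (P : C) (p : P ⟶ X), E.Proj P ∧ E.Deflation p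

/-- The stable relation: two morphisms are identified iff their difference factors
through a projective object. -/
def stableRel (E : ExactStructure C) : HomRel C := fun {X Y} f g =>
  ∃ (P : C) (a : X ⟶ P) (b : P ⟶ Y), E.Proj P ∧ a ≫ b = f - g

/-- The stable category `ℰ/𝒫`. -/
abbrev St (E : ExactStructure C) := CategoryTheory.Quotient (stableRel E)

/-- The projection functor `ℰ → ℰ/𝒫`. -/
def stq (E : ExactStructure C) : C ⥤ St E := Quotient.functor _

end Paper

namespace Paper

variable {C : Type u} [Category.{v} C] [Preadditive C] [HasZeroObject C] [HasBinaryBiproducts C]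

/-- An `n`-fold Yoneda extension `0 → B → X_n → ⋯ → X_1 → A → 0`, encoded
recursively by splicing off the leftmost conflation. -/
inductive NExt (E : ExactStructure C) : ℕ → C → C → Type (max u v)
  | one {A B Y : C} (f : B ⟶ Y) (g : Y ⟶ A) (h : E.ses f g) : NExt E 1 A B
  | step {A B K Y : C} {n : ℕ} (f : B ⟶ Y) (g : Y ⟶ K) (h : E.ses f g)
      (ξ : NExt E n A K) : NExt E (n + 1) A B

/-- Morphisms of Yoneda extensions over given maps on the two end objects. -/
inductive NExtMor (E : ExactStructure C) :
    ∀ {n : ℕ} {A A' B B' : C}, (B ⟶ B') → (A ⟶ A') → NExt E n A B → NExt E n A' B' → Prop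
  | one {A A' B B' Y Y' : C} {β : B ⟶ B'} {α : A ⟶ A'}
      {f : B ⟶ Y} {g : Y ⟶ A} {h : E.ses f g}
      {f' : B' ⟶ Y'} {g' : Y' ⟶ A'} {h' : E.ses f' g'}
      (y : Y ⟶ Y') (hy₁ : f ≫ y = β ≫ f') (hy₂ : y ≫ g' = g ≫ α) :
      NExtMor E β α (NExt.one f g h) (NExt.one f' g' h')
  | step {n : ℕ} {A A' B B' K K' Y Y' : C} {β : B ⟶ B'} {α : A ⟶ A'}
      {f : B ⟶ Y} {g : Y ⟶ K} {h : E.ses f g} {ξ : NExt E n A K}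
      {f' : B' ⟶ Y'} {g' : Y' ⟶ K'} {h' : E.ses f' g'} {ξ' : NExt E n A' K'}
      (y : Y ⟶ Y') (k : K ⟶ K') (hy₁ : f ≫ y = β ≫ f') (hy₂ : y ≫ g' = g ≫ k)
      (tail : NExtMor E k α ξ ξ') :
      NExtMor E β α (NExt.step f g h ξ) (NExt.step f' g' h' ξ')

/-- Yoneda equivalence of `n`-extensions: the equivalence relation generated by
morphisms of extensions which are the identity on both end objects. -/
def ExtEquiv (E : ExactStructure C) {n : ℕ} {A B : C} (ξ ξ' : NExt E n A B) : Prop :=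
  Relation.EqvGen (fun a b => NExtMor E (𝟙 B) (𝟙 A) a b) ξ ξ'

/-- The trivial `(n+1)`-extension of `A` by the zero object. -/
noncomputable def trivN (E : ExactStructure C) : (n : ℕ) → (A : C) → NExt E (n + 1) A (0 : C)
  | 0, A => NExt.one (0 : (0 : C) ⟶ A) (𝟙 A) (E.ses_zero_id A)
  | n + 1, A => NExt.step (𝟙 (0 : C)) (0 : (0 : C) ⟶ (0 : C)) (E.ses_id_zero (0 : C)) (trivN E n A)

/-- The trivial (split) `(n+1)`-extension of `A` by `B`. -/
noncomputable def trivExt (E : ExactStructure C) : (n : ℕ) → (A B : C) → NExt E (n + 1) A B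
  | 0, A, B => NExt.one (biprod.inl : B ⟶ B ⊞ A) (biprod.snd : B ⊞ A ⟶ A) (E.ses_split B A)
  | n + 1, A, B => NExt.step (𝟙 B) (0 : B ⟶ (0 : C)) (E.ses_id_zero B) (trivN E n A)

/-- `extVanish E n A B` means `Ext^n_ℰ(A, B) = 0`: every `n`-fold Yoneda extension
of `A` by `B` is Yoneda-equivalent to the trivial one. -/
def extVanish (E : ExactStructure C) : ℕ → C → C → Prop
  | 0, _, _ => True
  | n + 1, A, B => ∀ ξ : NExt E (n + 1) A B, ExtEquiv E ξ (trivExt E n A B)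

/-- `MRes E M n X` : there is an exact sequence `0 → M_n → ⋯ → M_1 → X → 0`
with all `M_j ∈ M`. -/
inductive MRes (E : ExactStructure C) (M : Set C) : ℕ → C → Prop
  | iso {X M₀ : C} (hM : M₀ ∈ M) (f : M₀ ⟶ X) (hf : IsIso f) : MRes E M 1 X
  | step {X K M₀ : C} {n : ℕ} (hM : M₀ ∈ M) (i : K ⟶ M₀) (p : M₀ ⟶ X)
      (hses : E.ses i p) (hK : MRes E M n K) : MRes E M (n + 1) X

/-- `CoRes E M n X` : there is an exact sequence `0 → X → M^1 → ⋯ → M^n → 0`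
with all `M^j ∈ M`. -/
inductive CoRes (E : ExactStructure C) (M : Set C) : ℕ → C → Prop
  | iso {X M₀ : C} (hM : M₀ ∈ M) (f : X ⟶ M₀) (hf : IsIso f) : CoRes E M 1 X
  | step {X K M₀ : C} {n : ℕ} (hM : M₀ ∈ M) (i : X ⟶ M₀) (p : M₀ ⟶ K)
      (hses : E.ses i p) (hK : CoRes E M n K) : CoRes E M (n + 1) X

/-- Right `M`-approximations. -/
def RightApprox {D : Type w} [Category.{w'} D] (M : Set D) {M₀ X : D} (f : M₀ ⟶ X) : Prop :=
  ∀ M' ∈ M, ∀ g : M' ⟶ X, ∃ h : M' ⟶ M₀, h ≫ f = g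

/-- Left `M`-approximations. -/
def LeftApprox {D : Type w} [Category.{w'} D] (M : Set D) {X M₀ : D} (f : X ⟶ M₀) : Prop :=
  ∀ M' ∈ M, ∀ g : X ⟶ M', ∃ h : M₀ ⟶ M', f ≫ h = g

/-- `d`-cluster tilting subcategory of an exact category (Definition 4.1). -/
structure ClusterTiltingExact (E : ExactStructure C) (M : Set C) (d : ℕ) : Prop where
  contra : ∀ X : C, ∃ (M₀ : C) (f : M₀ ⟶ X), M₀ ∈ M ∧ RightApprox M f
  cova : ∀ X : C, ∃ (M₀ : C) (f : X ⟶ M₀), M₀ ∈ M ∧ LeftApprox M f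
  gen : ∀ X : C, ∃ (M₀ : C) (f : M₀ ⟶ X), M₀ ∈ M ∧ E.Deflation f
  cogen : ∀ X : C, ∃ (M₀ : C) (f : X ⟶ M₀), M₀ ∈ M ∧ E.Inflation f
  eq_left : M = {X : C | ∀ M' ∈ M, ∀ i : ℕ, 1 ≤ i → i + 1 ≤ d → extVanish E i X M'}
  eq_right : M = {X : C | ∀ M' ∈ M, ∀ i : ℕ, 1 ≤ i → i + 1 ≤ d → extVanish E i M' X}

/-- `dℤ`-cluster tilting subcategory of an exact category: `d`-cluster tilting and
`Ext^i(ℳ,ℳ) = 0` for `i ∉ dℤ`. -/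
def ClusterTiltingExactDZ (E : ExactStructure C) (M : Set C) (d : ℕ) : Prop :=
  ClusterTiltingExact E M d ∧
    ∀ M₀ ∈ M, ∀ M₁ ∈ M, ∀ i : ℕ, 0 < i → ¬ (d ∣ i) → extVanish E i M₀ M₁

end Paper

namespace Paper

variable {C : Type u} [Category.{v} C] [Preadditive C] [HasZeroObject C] [HasBinaryBiproducts C]

/-- Iterated composition power of an endofunctor. -/
def fpow {D : Type w} [Category.{w'} D] (F : D ⥤ D) : ℕ → D ⥤ D
  | 0 => 𝟭 D
  | n + 1 => fpow F n ⋙ F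

/-- An `Ω`-sequence `Ω obj₃ → obj₁ → obj₂ → obj₃`. -/
structure LTTriangle (D : Type w) [Category.{w'} D] (Om : D ⥤ D) where
  obj₁ : D
  obj₂ : D
  obj₃ : D
  m₀ : Om.obj obj₃ ⟶ obj₁
  m₁ : obj₁ ⟶ obj₂
  m₂ : obj₂ ⟶ obj₃

/-- Isomorphism of `Ω`-sequences. -/
def LTTriangle.IsoSeq {D : Type w} [Category.{w'} D] {Om : D ⥤ D}
    (T T' : LTTriangle D Om) : Prop :=
  ∃ (e₁ : T.obj₁ ≅ T'.obj₁) (e₂ : T.obj₂ ≅ T'.obj₂) (e₃ : T.obj₃ ≅ T'.obj₃),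
    T.m₀ ≫ e₁.hom = Om.map e₃.hom ≫ T'.m₀ ∧
    T.m₁ ≫ e₂.hom = e₁.hom ≫ T'.m₁ ∧
    T.m₂ ≫ e₃.hom = e₂.hom ≫ T'.m₂

/-- A left triangulated structure on an additive category with endofunctor `Ω`
(Definition 3.1: axioms (T0)–(T5)). -/
structure LeftTriangStruct (D : Type w) [Category.{w'} D] [Preadditive D] [HasZeroObject D]
    (Om : D ⥤ D) where
  dist : Set (LTTriangle D Om)
  omAdd : Om.Additive
  iso_closed : ∀ T T' : LTTriangle D Om, T ∈ dist → T.IsoSeq T' → T' ∈ dist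
  contractible : ∀ X : D, LTTriangle.mk X X 0 0 (𝟙 X) 0 ∈ dist
  complete : ∀ {B Z : D} (w : B ⟶ Z),
      ∃ (A : D) (u : Om.obj Z ⟶ A) (v : A ⟶ B), LTTriangle.mk A B Z u v w ∈ dist
  rotate : ∀ T ∈ dist,
      LTTriangle.mk (Om.obj T.obj₃) T.obj₁ T.obj₂ (-Om.map T.m₂) T.m₀ T.m₁ ∈ dist
  complete_mor : ∀ T T' : LTTriangle D Om, T ∈ dist → T' ∈ dist →
      ∀ (g : T.obj₂ ⟶ T'.obj₂) (h : T.obj₃ ⟶ T'.obj₃), T.m₂ ≫ h = g ≫ T'.m₂ →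
      ∃ f : T.obj₁ ⟶ T'.obj₁, T.m₁ ≫ g = f ≫ T'.m₁ ∧ T.m₀ ≫ f = Om.map h ≫ T'.m₀
  octa : ∀ {A B Cc D₀ E₀ : D} {u : Om.obj Cc ⟶ A} {v : A ⟶ B} {w : B ⟶ Cc}
      {f : Om.obj D₀ ⟶ E₀} {g : E₀ ⟶ Cc} {h : Cc ⟶ D₀},
      LTTriangle.mk A B Cc u v w ∈ dist → LTTriangle.mk E₀ Cc D₀ f g h ∈ dist →
      ∃ (F : D) (α : A ⟶ F) (i : Om.obj D₀ ⟶ F) (j : F ⟶ B) (β : F ⟶ E₀),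
        LTTriangle.mk F B D₀ i j (w ≫ h) ∈ dist ∧
        LTTriangle.mk A F E₀ (Om.map g ≫ u) α β ∈ dist ∧
        u ≫ α = Om.map h ≫ i ∧ α ≫ j = v ∧ j ≫ w = β ≫ g

/-- A chain (tower) of triangles `Ω Z_{j-1} → Z_j → M_j → Z_{j-1}` with all middle
terms `M_j` in `X`, used to encode `(d+2)`-angles. -/
inductive LTChain {D : Type w} [Category.{w'} D] [Preadditive D] [HasZeroObject D]
    {Om : D ⥤ D} (L : LeftTriangStruct D Om) (X : Set D) : ℕ → D → D → Prop
  | zero (A : D) : LTChain L X 0 A A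
  | succ {n : ℕ} {A B B' M : D} (hc : LTChain L X n A B) (hM : M ∈ X)
      (u : Om.obj B ⟶ B') (v : B' ⟶ M) (w : M ⟶ B)
      (ht : LTTriangle.mk B' M B u v w ∈ L.dist) : LTChain L X (n + 1) A B'

/-- `d`-cluster tilting subcategory of a left triangulated category (Definition 5.1). -/
structure ClusterTiltingLT {D : Type w} [Category.{w'} D] [Preadditive D] [HasZeroObject D]
    {Om : D ⥤ D} (L : LeftTriangStruct D Om) (X : Set D) (d : ℕ) : Prop where
  summand_closed : ∀ {A Z : D}, Z ∈ X → ∀ (s : A ⟶ Z) (r : Z ⟶ A), s ≫ r = 𝟙 A → A ∈ X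
  /-- every object admits a `(d+2)`-angle `0 → C → X¹ → ⋯ → X^d → 0` with `Xⁱ ∈ X` -/
  cores : ∀ Cobj : D, ∃ Z₀ : D, IsZero Z₀ ∧ LTChain L X d Z₀ Cobj
  /-- every object admits a `(d+2)`-angle `0 → X_d → ⋯ → X_1 → C → 0` with `X_i ∈ X` -/
  res : ∀ Cobj : D, ∃ (Z₀ Z₁ W : D) (u : Om.obj Z₀ ⟶ Z₁) (v : Z₁ ⟶ Cobj) (w : Cobj ⟶ Z₀),
      IsZero Z₀ ∧ LTTriangle.mk Z₁ Cobj Z₀ u v w ∈ L.dist ∧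
      LTChain L X (d - 1) Z₁ W ∧ W ∈ X
  om_bij : ∀ (Cobj X₀ : D), X₀ ∈ X → ∀ i : ℕ, i + 2 ≤ d →
      Function.Bijective (fun f : (fpow Om i).obj X₀ ⟶ Cobj => Om.map f)
  hom_vanish : ∀ (X₀ X₁ : D), X₀ ∈ X → X₁ ∈ X → ∀ i : ℕ, 1 ≤ i → i + 1 ≤ d →
      ∀ f : (fpow Om i).obj X₁ ⟶ X₀, f = 0

/-- `dℤ`-cluster tilting subcategory of a left triangulated category:
`d`-cluster tilting and `Ω^d(X) ⊆ X`. -/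
def ClusterTiltingLTDZ {D : Type w} [Category.{w'} D] [Preadditive D] [HasZeroObject D]
    {Om : D ⥤ D} (L : LeftTriangStruct D Om) (X : Set D) (d : ℕ) : Prop :=
  ClusterTiltingLT L X d ∧ ∀ A ∈ X, (fpow Om d).obj A ∈ X

/-- A triangle `X → Y → Z → ΣX` for a suspension endofunctor. -/
structure Tri (T : Type w) [Category.{w'} T] (Sf : T ⥤ T) where
  obj₁ : T
  obj₂ : T
  obj₃ : T
  m₁ : obj₁ ⟶ obj₂
  m₂ : obj₂ ⟶ obj₃
  m₃ : obj₃ ⟶ Sf.obj obj₁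

/-- Isomorphism of candidate triangles. -/
def Tri.IsoTri {T : Type w} [Category.{w'} T] {Sf : T ⥤ T} (T₁ T₂ : Tri T Sf) : Prop :=
  ∃ (e₁ : T₁.obj₁ ≅ T₂.obj₁) (e₂ : T₁.obj₂ ≅ T₂.obj₂) (e₃ : T₁.obj₃ ≅ T₂.obj₃),
    T₁.m₁ ≫ e₂.hom = e₁.hom ≫ T₂.m₁ ∧
    T₁.m₂ ≫ e₃.hom = e₂.hom ≫ T₂.m₂ ∧
    T₁.m₃ ≫ Sf.map e₁.hom = e₃.hom ≫ T₂.m₃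

/-- `dist` is a triangulated structure on `T` with suspension the equivalence `Se`
(the classical Verdier axioms TR0–TR4). -/
structure TriangStructOn (T : Type w) [Category.{w'} T] [Preadditive T] [HasZeroObject T]
    (Se : T ≌ T) (dist : Set (Tri T Se.functor)) : Prop where
  iso_closed : ∀ T₁ T₂ : Tri T Se.functor, T₁ ∈ dist → T₁.IsoTri T₂ → T₂ ∈ dist
  id_tri : ∀ X : T, Tri.mk X X 0 (𝟙 X) 0 0 ∈ dist
  complete : ∀ {X Y : T} (f : X ⟶ Y),
      ∃ (Z : T) (g : Y ⟶ Z) (h : Z ⟶ Se.functor.obj X), Tri.mk X Y Z f g h ∈ dist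
  rotate : ∀ T₁ ∈ dist,
      Tri.mk T₁.obj₂ T₁.obj₃ (Se.functor.obj T₁.obj₁) T₁.m₂ T₁.m₃ (-(Se.functor.map T₁.m₁)) ∈ dist
  unrotate : ∀ {X Y Z : T} (f : X ⟶ Y) (g : Y ⟶ Z) (h : Z ⟶ Se.functor.obj X),
      Tri.mk Y Z (Se.functor.obj X) g h (-(Se.functor.map f)) ∈ dist →
      Tri.mk X Y Z f g h ∈ dist
  complete_mor : ∀ T₁ T₂ : Tri T Se.functor, T₁ ∈ dist → T₂ ∈ dist →
      ∀ (a : T₁.obj₁ ⟶ T₂.obj₁) (b : T₁.obj₂ ⟶ T₂.obj₂), T₁.m₁ ≫ b = a ≫ T₂.m₁ →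
      ∃ c : T₁.obj₃ ⟶ T₂.obj₃, T₁.m₂ ≫ c = b ≫ T₂.m₂ ∧ T₁.m₃ ≫ Se.functor.map a = c ≫ T₂.m₃
  octa : ∀ {X Y Z U V W : T} (u : X ⟶ Y) (v : Y ⟶ Z) (a : Y ⟶ U) (a' : U ⟶ Se.functor.obj X)
      (b : Z ⟶ V) (b' : V ⟶ Se.functor.obj Y) (c : Z ⟶ W) (c' : W ⟶ Se.functor.obj X),
      Tri.mk X Y U u a a' ∈ dist → Tri.mk Y Z V v b b' ∈ dist →
      Tri.mk X Z W (u ≫ v) c c' ∈ dist →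
      ∃ (f₁ : U ⟶ W) (f₂ : W ⟶ V),
        Tri.mk U W V f₁ f₂ (b' ≫ Se.functor.map a) ∈ dist ∧
        a ≫ f₁ = v ≫ c ∧ f₁ ≫ c' = a' ∧ c ≫ f₂ = b ∧ f₂ ≫ b' = c' ≫ Se.functor.map u

/-- `d`-cluster tilting subcategory of a category with suspension functor `Sf`
(the triangulated-sense definition, Definition 4.1 with `Ext^i(X,Y) = Hom(X, Σ^i Y)`). -/
structure ClusterTiltingTri (T : Type w) [Category.{w'} T] [Preadditive T]
    (Sf : T ⥤ T) (M : Set T) (d : ℕ) : Prop where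
  contra : ∀ X : T, ∃ (M₀ : T) (f : M₀ ⟶ X), M₀ ∈ M ∧ RightApprox M f
  cova : ∀ X : T, ∃ (M₀ : T) (f : X ⟶ M₀), M₀ ∈ M ∧ LeftApprox M f
  eq_left : M = {Eo : T | ∀ M' ∈ M, ∀ i : ℕ, 1 ≤ i → i + 1 ≤ d →
      ∀ f : Eo ⟶ (fpow Sf i).obj M', f = 0}
  eq_right : M = {Eo : T | ∀ M' ∈ M, ∀ i : ℕ, 1 ≤ i → i + 1 ≤ d →
      ∀ f : M' ⟶ (fpow Sf i).obj Eo, f = 0}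

/-- `dℤ`-cluster tilting subcategory in the triangulated sense:
`d`-cluster tilting and `Σ^d(M) ⊆ M`. -/
def ClusterTiltingTriDZ (T : Type w) [Category.{w'} T] [Preadditive T]
    (Sf : T ⥤ T) (M : Set T) (d : ℕ) : Prop :=
  ClusterTiltingTri T Sf M d ∧ ∀ A ∈ M, (fpow Sf d).obj A ∈ M

/-- Integer powers of an auto-equivalence. -/
def zpow {T : Type w} [Category.{w'} T] (Se : T ≌ T) : ℤ → T ⥤ T
  | Int.ofNat n => fpow Se.functor n
  | Int.negSucc n => fpow Se.inverse (n + 1)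

end Paper

namespace Paper

variable {C : Type u} [Category.{v} C] [Preadditive C] [HasZeroObject C] [HasBinaryBiproducts C]

/-- Raising a morphism `Ω^a X ⟶ Ω^b Y` by applying `F` `j` more times. -/
def raiseN {D : Type w} [Category.{w'} D] (F : D ⥤ D) :
    ∀ (j : ℕ) {X Y : D} {a b : ℕ},
      ((fpow F a).obj X ⟶ (fpow F b).obj Y) → ((fpow F (a + j)).obj X ⟶ (fpow F (b + j)).obj Y)
  | 0, _, _, _, _, f => f
  | j + 1, _, _, _, _, f => F.map (raiseN F j f)

/-- `S` is (a realization of) the stabilization `ℤD` of the category `D` with respect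
to the endofunctor `F`: objects are pairs `(X, n)`, `X ∈ D`, `n ∈ ℤ`, and
`Hom((X,m),(Y,n)) = colim_k Hom(F^{m+k} X, F^{n+k} Y)`.  The data consists of the
objects `obj X n` together with the structure maps `lift` into the colimit, and the
axioms say exactly that the hom groups are the filtered colimits above and that every
object of `S` is isomorphic to some `(X, n)`. -/
structure IsStabilization {D : Type u'} [Category.{v'} D] [Preadditive D] (F : D ⥤ D)
    (S : Type w) [Category.{w'} S] [Preadditive S] where
  obj : D → ℤ → S
  lift : ∀ {X Y : D} (a b : ℕ) (m n : ℤ), (a : ℤ) + n = (b : ℤ) + m →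
      (((fpow F a).obj X) ⟶ ((fpow F b).obj Y)) → (obj X m ⟶ obj Y n)
  lift_raise : ∀ {X Y : D} (a b : ℕ) (m n : ℤ) (h : (a : ℤ) + n = (b : ℤ) + m)
      (h' : ((a + 1 : ℕ) : ℤ) + n = ((b + 1 : ℕ) : ℤ) + m)
      (f : (fpow F a).obj X ⟶ (fpow F b).obj Y),
      lift (a + 1) (b + 1) m n h' (F.map f) = lift a b m n h f
  lift_id : ∀ {X : D} (a : ℕ) (n : ℤ) (h : (a : ℤ) + n = (a : ℤ) + n),
      lift a a n n h (𝟙 ((fpow F a).obj X)) = 𝟙 (obj X n)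
  lift_comp : ∀ {X Y Z : D} (a b c : ℕ) (m n p : ℤ)
      (hab : (a : ℤ) + n = (b : ℤ) + m) (hbc : (b : ℤ) + p = (c : ℤ) + n)
      (hac : (a : ℤ) + p = (c : ℤ) + m)
      (f : (fpow F a).obj X ⟶ (fpow F b).obj Y) (g : (fpow F b).obj Y ⟶ (fpow F c).obj Z),
      lift a b m n hab f ≫ lift b c n p hbc g = lift a c m p hac (f ≫ g)
  lift_add : ∀ {X Y : D} (a b : ℕ) (m n : ℤ) (h : (a : ℤ) + n = (b : ℤ) + m)
      (f g : (fpow F a).obj X ⟶ (fpow F b).obj Y),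
      lift a b m n h (f + g) = lift a b m n h f + lift a b m n h g
  lift_surj : ∀ {X Y : D} {m n : ℤ} (φ : obj X m ⟶ obj Y n),
      ∃ (a b : ℕ) (h : (a : ℤ) + n = (b : ℤ) + m) (f : (fpow F a).obj X ⟶ (fpow F b).obj Y),
        φ = lift a b m n h f
  lift_inj : ∀ {X Y : D} (a b a' b' : ℕ) (m n : ℤ)
      (h : (a : ℤ) + n = (b : ℤ) + m) (h' : (a' : ℤ) + n = (b' : ℤ) + m)
      (f : (fpow F a).obj X ⟶ (fpow F b).obj Y)
      (f' : (fpow F a').obj X ⟶ (fpow F b').obj Y),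
      lift a b m n h f = lift a' b' m n h' f' →
      ∃ (j j' : ℕ), a + j = a' + j' ∧ b + j = b' + j' ∧
        HEq (raiseN F j f) (raiseN F j' f')
  dense : ∀ s : S, ∃ (X : D) (n : ℤ), Nonempty (s ≅ obj X n)

/-- The subcategory `dℤ𝒳` of the stabilization: all objects isomorphic to some
`(X, dk)` with `X ∈ 𝒳`, `k ∈ ℤ`. -/
def dZSet {D : Type u'} [Category.{v'} D] [Preadditive D] {F : D ⥤ D}
    {S : Type w} [Category.{w'} S] [Preadditive S] (st : IsStabilization F S)
    (X : Set D) (d : ℕ) : Set S :=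
  {s | ∃ (A : D) (k : ℤ), A ∈ X ∧ Nonempty (s ≅ st.obj A ((d : ℤ) * k))}

/-- The standard triangles of the stabilization of a left triangulated category:
those induced by a sequence in `D` whose sign-twist by `(-1)^k` is a triangle. -/
def stdTriangles {D : Type u'} [Category.{v'} D] [Preadditive D] [HasZeroObject D]
    {Om : D ⥤ D} (L : LeftTriangStruct D Om)
    {S : Type w} [Category.{w'} S] [Preadditive S] (st : IsStabilization Om S)
    (Se : S ≌ S) (σ : ∀ (A : D) (n : ℤ), Se.functor.obj (st.obj A n) ≅ st.obj A (n - 1)) :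
    Set (Tri S Se.functor) :=
  {T | ∃ (C₁ C₂ C₃ : D) (n₁ n₂ n₃ k : ℤ) (a₁ a₂ a₃ : ℕ),
    (a₁ : ℤ) = n₁ + k ∧ (a₂ : ℤ) = n₂ + k ∧ (a₃ : ℤ) = n₃ + k ∧
    ∃ (u : (fpow Om (a₁ + 1)).obj C₁ ⟶ (fpow Om a₃).obj C₃)
      (v : (fpow Om a₃).obj C₃ ⟶ (fpow Om a₂).obj C₂)
      (w : (fpow Om a₂).obj C₂ ⟶ (fpow Om a₁).obj C₁)
      (h₁ : (a₃ : ℤ) + n₂ = (a₂ : ℤ) + n₃) (h₂ : (a₂ : ℤ) + n₁ = (a₁ : ℤ) + n₂)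
      (h₃ : ((a₁ + 1 : ℕ) : ℤ) + (n₃ - 1) = (a₃ : ℤ) + n₁),
      LTTriangle.mk ((fpow Om a₃).obj C₃) ((fpow Om a₂).obj C₂) ((fpow Om a₁).obj C₁)
        (((k.negOnePow : ℤˣ) : ℤ) • u) (((k.negOnePow : ℤˣ) : ℤ) • v)
        (((k.negOnePow : ℤˣ) : ℤ) • w) ∈ L.dist ∧
      T = Tri.mk (st.obj C₃ n₃) (st.obj C₂ n₂) (st.obj C₁ n₁)
            (st.lift a₃ a₂ n₃ n₂ h₁ v) (st.lift a₂ a₁ n₂ n₁ h₂ w)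
            (st.lift (a₁ + 1) a₃ n₁ (n₃ - 1) h₃ u ≫ (σ C₃ n₃).inv)}

/-- The syzygy functor `Ω` on the stable category, together with its defining data:
for each object a chosen conflation `0 → K X → P X → X → 0` with `P X` projective,
identifications `Ω(X̲) ≅ K X`, and the characterization of `Ω` on morphisms by
lifting along these conflations. -/
structure SyzygyFunctor (E : ExactStructure C) where
  Om : St E ⥤ St E
  P : C → C
  projP : ∀ X : C, E.Proj (P X)
  K : C → C
  i : ∀ X : C, K X ⟶ P X
  p : ∀ X : C, P X ⟶ X
  sesX : ∀ X : C, E.ses (i X) (p X)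
  iso : ∀ X : C, Om.obj ((stq E).obj X) ≅ (stq E).obj (K X)
  map_spec : ∀ {X Y : C} (f : X ⟶ Y) (g : P X ⟶ P Y) (k : K X ⟶ K Y),
      g ≫ p Y = p X ≫ f → i X ≫ g = k ≫ i Y →
      Om.map ((stq E).map f) = (iso X).hom ≫ (stq E).map k ≫ (iso Y).inv

/-- The standard triangles of the stable category of an exact category with enough
projectives (Theorem 3.2): `Ω E₁ → E₃ → E₂ → E₁` induced by a conflation
`0 → E₃ → E₂ → E₁ → 0` and a lift of diagrams against `0 → K E₁ → P E₁ → E₁ → 0`. -/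
def stdStableTriangles (E : ExactStructure C) (SF : SyzygyFunctor E) :
    Set (LTTriangle (St E) SF.Om) :=
  {T | ∃ (E₁ E₂ E₃ : C) (v : E₃ ⟶ E₂) (w : E₂ ⟶ E₁) (_ : E.ses v w)
      (u : SF.K E₁ ⟶ E₃) (g : SF.P E₁ ⟶ E₂),
      SF.i E₁ ≫ g = u ≫ v ∧ g ≫ w = SF.p E₁ ∧
      (LTTriangle.mk ((stq E).obj E₃) ((stq E).obj E₂) ((stq E).obj E₁)
        ((SF.iso E₁).hom ≫ (stq E).map u) ((stq E).map v) ((stq E).map w)).IsoSeq T}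

/-- Gorenstein projective objects: cycles of totally acyclic complexes of projectives.
The totally acyclic complex is encoded by its sequence of conflations
`0 → G_i → P_i → G_{i-1} → 0` with `P_i` projective, together with the condition that
each map `G_i → Q` to a projective extends to `P_i` (i.e. `Hom(P_•, Q)` is acyclic). -/
def GorensteinProj (E : ExactStructure C) (G : C) : Prop :=
  ∃ (Gs Ps : ℤ → C) (g : ∀ i : ℤ, Gs i ⟶ Ps i) (p : ∀ i : ℤ, Ps i ⟶ Gs (i - 1)),
    Gs 0 = G ∧ ∀ i : ℤ, E.Proj (Ps i) ∧ E.ses (g i) (p i) ∧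
      (∀ Q : C, E.Proj Q → ∀ f : Gs i ⟶ Q, ∃ h : Ps i ⟶ Q, g i ≫ h = f)

/-- `Syz E n X W` : `W` is an `n`-th syzygy of `X`, i.e. there is a chain of
conflations `0 → K_{j+1} → P_j → K_j → 0` with each `P_j` projective, `K_0 = X`,
`K_n = W`. -/
inductive Syz (E : ExactStructure C) : ℕ → C → C → Prop
  | zero (X : C) : Syz E 0 X X
  | succ {n : ℕ} {X K W P : C} (h : Syz E n X K) (hP : E.Proj P) (w : W ⟶ P) (p : P ⟶ K)
      (hs : E.ses w p) : Syz E (n + 1) X W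

/-- `X` has finite Gorenstein projective dimension: some syzygy `Ω^n(X̲)` is
(stably isomorphic to) a Gorenstein projective object. -/
def FiniteGPdim (E : ExactStructure C) (X : C) : Prop :=
  ∃ (n : ℕ) (W G : C), Syz E n X W ∧ GorensteinProj E G ∧
    Nonempty ((stq E).obj W ≅ (stq E).obj G)

end Paper

namespace Paper


section AuxStatement10

set_option linter.unusedSectionVars false
set_option linter.unnecessarySimpa false

variable {T : Type w} [Category.{w'} T] [Preadditive T] [HasZeroObject T]

theorem fpow_comp_comm {D : Type u} [Category.{v} D] (F : D ⥤ D) (n : ℕ) :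
    fpow F n ⋙ F = F ⋙ fpow F n := by
  induction n with
  | zero =>
    show 𝟭 D ⋙ F = F ⋙ 𝟭 D
    rw [Functor.id_comp, Functor.comp_id]
  | succ n ih =>
    calc fpow F (n + 1) ⋙ F = (F ⋙ fpow F n) ⋙ F := by
          show (fpow F n ⋙ F) ⋙ F = _
          rw [ih]
      _ = F ⋙ fpow F (n + 1) := Functor.assoc _ _ _

theorem isZero_fobj (Se : T ≌ T) {Z : T} (hZ : IsZero Z) : IsZero (Se.functor.obj Z) := by
  refine ⟨fun Y => ?_, fun Y => ?_⟩
  · have u := (hZ.unique_to (Se.inverse.obj Y)).some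
    exact ⟨@Equiv.unique _ _ u (Se.toAdjunction.homEquiv Z Y)⟩
  · have u := (hZ.unique_from (Se.inverse.obj Y)).some
    exact ⟨@Equiv.unique _ _ u (Se.symm.toAdjunction.homEquiv Y Z).symm⟩

theorem isZero_iobj (Se : T ≌ T) {Z : T} (hZ : IsZero Z) : IsZero (Se.inverse.obj Z) :=
  isZero_fobj Se.symm hZ

theorem fmap_zero (Se : T ≌ T) {A B : T} : Se.functor.map (0 : A ⟶ B) = 0 := by
  have h1 : (0 : A ⟶ B) = (0 : A ⟶ (0 : T)) ≫ (0 : (0 : T) ⟶ B) := by simp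
  rw [h1, Se.functor.map_comp,
    (isZero_fobj Se (isZero_zero T)).eq_zero_of_src (Se.functor.map (0 : (0 : T) ⟶ B)),
    comp_zero]

theorem imap_zero (Se : T ≌ T) {A B : T} : Se.inverse.map (0 : A ⟶ B) = 0 :=
  fmap_zero Se.symm

/-- Transport a morphism `Q ⟶ Σ M` to a morphism `Ω Q ⟶ M`. -/
def lowerHom (Se : T ≌ T) {Q M : T} (t : Q ⟶ Se.functor.obj M) : Se.inverse.obj Q ⟶ M :=
  Se.inverse.map t ≫ Se.unitInv.app M

theorem map_lower (Se : T ≌ T) {Q M : T} (t : Q ⟶ Se.functor.obj M) :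
    Se.functor.map (lowerHom Se t) = Se.counit.app Q ≫ t := by
  rw [lowerHom, Se.functor.map_comp, ← Se.counit_app_functor M]
  simpa using Se.counit.naturality t

theorem counitInv_comp_map_lower (Se : T ≌ T) {Q M : T} (t : Q ⟶ Se.functor.obj M) :
    (Se.counitIso.app Q).inv ≫ Se.functor.map (lowerHom Se t) = t := by
  rw [map_lower]
  exact Iso.inv_hom_id_assoc (Se.counitIso.app Q) t

theorem lower_zero (Se : T ≌ T) {Q M : T} : lowerHom Se (0 : Q ⟶ Se.functor.obj M) = 0 := by
  rw [lowerHom, imap_zero, zero_comp]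

theorem pairwise_iff {A B : T} : (∀ f : A ⟶ B, f = 0) ↔ ∀ f g : A ⟶ B, f = g :=
  ⟨fun h f g => (h f).trans (h g).symm, fun h f => h f 0⟩

theorem one_step (Se : T ≌ T) (A B : T) :
    (∀ f : Se.inverse.obj A ⟶ B, f = 0) ↔ ∀ g : A ⟶ Se.functor.obj B, g = 0 := by
  rw [pairwise_iff, pairwise_iff]
  have e : (Se.inverse.obj A ⟶ B) ≃ (A ⟶ Se.functor.obj B) := Se.symm.toAdjunction.homEquiv A B
  exact ⟨fun h f g => e.symm.injective (h _ _), fun h f g => e.injective (h _ _)⟩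

theorem vanish_iff (Se : T ≌ T) (i : ℕ) (A B : T) :
    (∀ f : (fpow Se.inverse i).obj A ⟶ B, f = 0) ↔
      ∀ g : A ⟶ (fpow Se.functor i).obj B, g = 0 := by
  induction i generalizing B with
  | zero => exact Iff.rfl
  | succ i ih =>
    rw [show (fpow Se.functor (i + 1)).obj B = (fpow Se.functor i).obj (Se.functor.obj B) from
      Functor.congr_obj (fpow_comp_comm Se.functor i) B]
    exact (one_step Se ((fpow Se.inverse i).obj A) B).trans (ih (Se.functor.obj B))


variable (Se : T ≌ T) (dist : Set (Tri T Se.functor))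

theorem tri_comp₁₂ (hTS : TriangStructOn T Se dist) {T₁ : Tri T Se.functor} (h : T₁ ∈ dist) :
    T₁.m₁ ≫ T₁.m₂ = 0 := by
  obtain ⟨c, hc, -⟩ := hTS.complete_mor (Tri.mk T₁.obj₁ T₁.obj₁ 0 (𝟙 _) 0 0) T₁
    (hTS.id_tri _) h (𝟙 _) T₁.m₁ (by simp)
  simpa using hc.symm

theorem zero_tri (hTS : TriangStructOn T Se dist) (N : T) :
    Tri.mk (0 : T) N N 0 (𝟙 N) 0 ∈ dist := by
  apply hTS.unrotate (0 : (0 : T) ⟶ N) (𝟙 N) (0 : N ⟶ Se.functor.obj (0 : T))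
  apply hTS.iso_closed _ _ (hTS.id_tri N)
  exact ⟨Iso.refl N, Iso.refl N, (isZero_zero T).iso (isZero_fobj Se (isZero_zero T)),
    by simp, by simp, by simp [fmap_zero]⟩

theorem fill_first (hTS : TriangStructOn T Se dist) {T₁ T₂ : Tri T Se.functor}
    (h₁ : T₁ ∈ dist) (h₂ : T₂ ∈ dist) (b : T₁.obj₂ ⟶ T₂.obj₂) (c : T₁.obj₃ ⟶ T₂.obj₃)
    (hbc : T₁.m₂ ≫ c = b ≫ T₂.m₂) :
    ∃ a : T₁.obj₁ ⟶ T₂.obj₁, T₁.m₁ ≫ b = a ≫ T₂.m₁ := by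
  obtain ⟨α, hα₁, hα₂⟩ := hTS.complete_mor _ _ (hTS.rotate T₁ h₁) (hTS.rotate T₂ h₂) b c hbc
  refine ⟨Se.functor.preimage α, ?_⟩
  apply Se.functor.map_injective
  rw [Se.functor.map_comp, Se.functor.map_comp, Se.functor.map_preimage]
  have h' : -(Se.functor.map T₁.m₁ ≫ Se.functor.map b) = -(α ≫ Se.functor.map T₂.m₁) := by
    simpa [Preadditive.neg_comp, Preadditive.comp_neg] using hα₂
  exact neg_inj.mp h'

theorem cofactor (hTS : TriangStructOn T Se dist) {T₁ : Tri T Se.functor} (h : T₁ ∈ dist)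
    {N : T} (φ : T₁.obj₂ ⟶ N) (hφ : T₁.m₁ ≫ φ = 0) :
    ∃ ψ : T₁.obj₃ ⟶ N, T₁.m₂ ≫ ψ = φ := by
  obtain ⟨ψ, hψ, -⟩ := hTS.complete_mor T₁ _ h (zero_tri Se dist hTS N) 0 φ (by simp [hφ])
  exact ⟨ψ, by simpa using hψ⟩

theorem factor₁ (hTS : TriangStructOn T Se dist) {T₁ : Tri T Se.functor} (h : T₁ ∈ dist)
    {W : T} (t : W ⟶ T₁.obj₂) (ht : t ≫ T₁.m₂ = 0) :
    ∃ s : W ⟶ T₁.obj₁, s ≫ T₁.m₁ = t := by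
  obtain ⟨a, ha⟩ := fill_first Se dist hTS (hTS.id_tri W) h t 0 (by simp [ht])
  exact ⟨a, by simpa using ha.symm⟩

theorem factor₂ (hTS : TriangStructOn T Se dist) {T₁ : Tri T Se.functor} (h : T₁ ∈ dist)
    {W : T} (t : W ⟶ T₁.obj₃) (ht : t ≫ T₁.m₃ = 0) :
    ∃ s : W ⟶ T₁.obj₂, s ≫ T₁.m₂ = t :=
  factor₁ Se dist hTS (hTS.rotate T₁ h) t ht

theorem unrotate_tri (hTS : TriangStructOn T Se dist) {A B C : T} {u : A ⟶ B} {v : B ⟶ C}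
    {w : C ⟶ Se.functor.obj A} (h : Tri.mk A B C u v w ∈ dist) :
    Tri.mk (Se.inverse.obj C) A B (lowerHom Se (-w)) u (v ≫ (Se.counitIso.app C).inv) ∈ dist := by
  apply hTS.unrotate
  apply hTS.iso_closed _ _ h
  refine ⟨Iso.refl A, Iso.refl B, (Se.counitIso.app C).symm, by simp, by simp, ?_⟩
  show w ≫ Se.functor.map (𝟙 A) =
    (Se.counitIso.app C).inv ≫ (-(Se.functor.map (lowerHom Se (-w))))
  rw [Se.functor.map_id, Category.comp_id, Preadditive.comp_neg, counitInv_comp_map_lower,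
    neg_neg]

theorem split_of_m₃_zero (hTS : TriangStructOn T Se dist) {A B C : T} {u : A ⟶ B} {v : B ⟶ C}
    {w : C ⟶ Se.functor.obj A} (h : Tri.mk A B C u v w ∈ dist) (hw : w = 0) :
    ∃ r : B ⟶ A, u ≫ r = 𝟙 A := by
  have h2 := unrotate_tri Se dist hTS h
  have hl : lowerHom Se (-w) = 0 := by rw [hw, neg_zero, lower_zero]
  obtain ⟨ψ, hψ⟩ := cofactor Se dist hTS h2 (𝟙 A) (by
    show lowerHom Se (-w) ≫ 𝟙 A = 0
    rw [hl, zero_comp])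
  exact ⟨ψ, hψ⟩


theorem mem_Ldist (L : LeftTriangStruct T Se.inverse)
    (hL : L.dist = {Tr : LTTriangle T Se.inverse |
      Tri.mk Tr.obj₁ Tr.obj₂ Tr.obj₃ Tr.m₁ Tr.m₂
        ((Se.counitIso.app Tr.obj₃).inv ≫ Se.functor.map Tr.m₀) ∈ dist})
    {A B C : T} (m₀ : Se.inverse.obj C ⟶ A) (m₁ : A ⟶ B) (m₂ : B ⟶ C) :
    LTTriangle.mk A B C m₀ m₁ m₂ ∈ L.dist ↔
      Tri.mk A B C m₁ m₂ ((Se.counitIso.app C).inv ≫ Se.functor.map m₀) ∈ dist := by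
  rw [hL]
  exact Iff.rfl

/-- A chain of triangles anchored at the `A`-end: peels off the triangle closest to `A`. -/
inductive RChain {D : Type w} [Category.{w'} D] [Preadditive D] [HasZeroObject D]
    {Om : D ⥤ D} (L : LeftTriangStruct D Om) (X : Set D) : ℕ → D → D → Prop
  | zero (A : D) : RChain L X 0 A A
  | cons {n : ℕ} {A B₁ B M : D} (hM : M ∈ X) (u : Om.obj A ⟶ B₁) (v : B₁ ⟶ M) (w : M ⟶ A)
      (ht : LTTriangle.mk B₁ M A u v w ∈ L.dist) (hc : RChain L X n B₁ B) :
      RChain L X (n + 1) A B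

theorem ltchain_cons {D : Type w} [Category.{w'} D] [Preadditive D] [HasZeroObject D]
    {Om : D ⥤ D} {L : LeftTriangStruct D Om} {X : Set D} :
    ∀ {n : ℕ} {B₁ B : D}, LTChain L X n B₁ B →
      ∀ {A M : D} (u : Om.obj A ⟶ B₁) (v : B₁ ⟶ M) (w : M ⟶ A), M ∈ X →
      LTTriangle.mk B₁ M A u v w ∈ L.dist → LTChain L X (n + 1) A B := by
  intro n B₁ B hc
  induction hc with
  | zero A' =>
    intro A M u v w hM ht
    exact LTChain.succ (LTChain.zero A) hM u v w ht
  | succ hc hM' u' v' w' ht' ih =>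
    intro A M u v w hM ht
    exact LTChain.succ (ih u v w hM ht) hM' u' v' w' ht'

theorem rchain_snoc {D : Type w} [Category.{w'} D] [Preadditive D] [HasZeroObject D]
    {Om : D ⥤ D} {L : LeftTriangStruct D Om} {X : Set D} :
    ∀ {n : ℕ} {A B : D}, RChain L X n A B →
      ∀ {B' M : D} (u : Om.obj B ⟶ B') (v : B' ⟶ M) (w : M ⟶ B), M ∈ X →
      LTTriangle.mk B' M B u v w ∈ L.dist → RChain L X (n + 1) A B' := by
  intro n A B hc
  induction hc with
  | zero A' =>
    intro B' M u v w hM ht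
    exact RChain.cons hM u v w ht (RChain.zero B')
  | cons hM' u' v' w' ht' hc' ih =>
    intro B' M u v w hM ht
    exact RChain.cons hM' u' v' w' ht' (ih u v w hM ht)

theorem toRChain {D : Type w} [Category.{w'} D] [Preadditive D] [HasZeroObject D]
    {Om : D ⥤ D} {L : LeftTriangStruct D Om} {X : Set D} :
    ∀ {n : ℕ} {A B : D}, LTChain L X n A B → RChain L X n A B := by
  intro n A B hc
  induction hc with
  | zero A => exact RChain.zero A
  | succ hc hM u v w ht ih => exact rchain_snoc ih u v w hM ht

theorem ofRChain {D : Type w} [Category.{w'} D] [Preadditive D] [HasZeroObject D]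
    {Om : D ⥤ D} {L : LeftTriangStruct D Om} {X : Set D} :
    ∀ {n : ℕ} {A B : D}, RChain L X n A B → LTChain L X n A B := by
  intro n A B hc
  induction hc with
  | zero A => exact LTChain.zero A
  | cons hM u v w ht hc ih => exact ltchain_cons ih u v w hM ht


variable (L : LeftTriangStruct T Se.inverse)

theorem VAN2 (hTS : TriangStructOn T Se dist)
    (hL : L.dist = {Tr : LTTriangle T Se.inverse |
      Tri.mk Tr.obj₁ Tr.obj₂ Tr.obj₃ Tr.m₁ Tr.m₂
        ((Se.counitIso.app Tr.obj₃).inv ≫ Se.functor.map Tr.m₀) ∈ dist})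
    (X : Set T) (d : ℕ) (V : T)
    (hV : ∀ M'' ∈ X, ∀ i : ℕ, 1 ≤ i → i ≤ d - 1 →
      ∀ t : V ⟶ (fpow Se.functor i).obj M'', t = 0) :
    ∀ {n : ℕ} {A B : T}, RChain L X n A B → B ∈ X → ∀ k : ℕ, 1 ≤ k → k + n ≤ d - 1 →
      ∀ t : V ⟶ (fpow Se.functor k).obj A, t = 0 := by
  intro n A B hc
  induction hc with
  | zero A0 => exact fun hA k h1 h2 t => hV A0 hA k h1 (by omega) t
  | @cons n A B₁ B M hM u v w ht hc ih =>
    intro hB k h1 h2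
    refine (vanish_iff Se k V A).mp ?_
    intro t'
    have hT := (mem_Ldist Se dist L hL u v w).mp ht
    have hall : ∀ x : (fpow Se.inverse k).obj V ⟶ Se.functor.obj B₁, x = 0 := by
      refine (vanish_iff Se k V (Se.functor.obj B₁)).mpr ?_
      have key : (fpow Se.functor (k + 1)).obj B₁ =
          (fpow Se.functor k).obj (Se.functor.obj B₁) :=
        Functor.congr_obj (fpow_comp_comm Se.functor k) B₁
      rw [← key]
      exact fun g => ih hB (k + 1) (by omega) (by omega) g
    obtain ⟨s, hs⟩ := factor₂ Se dist hTS hT t' (hall _)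
    have hs0 : s = 0 := (vanish_iff Se k V M).mpr (fun g => hV M hM k h1 (by omega) g) s
    rw [← hs, hs0, zero_comp]

theorem VAN3 (hTS : TriangStructOn T Se dist)
    (hL : L.dist = {Tr : LTTriangle T Se.inverse |
      Tri.mk Tr.obj₁ Tr.obj₂ Tr.obj₃ Tr.m₁ Tr.m₂
        ((Se.counitIso.app Tr.obj₃).inv ≫ Se.functor.map Tr.m₀) ∈ dist})
    (X : Set T) (d : ℕ) (N : T)
    (hN : ∀ i : ℕ, 1 ≤ i → i ≤ d - 1 → ∀ M'' ∈ X,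
      ∀ t : M'' ⟶ (fpow Se.functor i).obj N, t = 0) :
    ∀ {n : ℕ} {A B : T}, LTChain L X n A B → IsZero A → ∀ j : ℕ, 1 ≤ j → j + n ≤ d →
      ∀ t : B ⟶ (fpow Se.functor j).obj N, t = 0 := by
  intro n A B hc
  induction hc with
  | zero A0 => exact fun hA j h1 h2 t => hA.eq_zero_of_src t
  | @succ n A B B' M hc hM u v w ht ih =>
    intro hA j h1 h2 t
    have hT := (mem_Ldist Se dist L hL u v w).mp ht
    have hUT := unrotate_tri Se dist hTS hT
    have hall : ∀ x : Se.inverse.obj B ⟶ (fpow Se.functor j).obj N, x = 0 := by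
      apply (one_step Se B ((fpow Se.functor j).obj N)).mpr
      intro g
      exact ih hA (j + 1) (by omega) (by omega) g
    obtain ⟨ψ, hψ⟩ := cofactor Se dist hTS hUT t (hall _)
    have hψ0 : ψ = 0 := hN j h1 (by omega) M hM ψ
    rw [← hψ, hψ0, comp_zero]


theorem forward_dir [HasBinaryBiproducts T] (hTS : TriangStructOn T Se dist)
    (hL : L.dist = {Tr : LTTriangle T Se.inverse |
      Tri.mk Tr.obj₁ Tr.obj₂ Tr.obj₃ Tr.m₁ Tr.m₂
        ((Se.counitIso.app Tr.obj₃).inv ≫ Se.functor.map Tr.m₀) ∈ dist})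
    (X : Set T) (d : ℕ) (hd : 0 < d) (hCT : ClusterTiltingLT L X d) :
    ClusterTiltingTri T Se.functor X d := by
  have hXX : ∀ M₀ ∈ X, ∀ M₁ ∈ X, ∀ i : ℕ, 1 ≤ i → i ≤ d - 1 →
      ∀ t : M₀ ⟶ (fpow Se.functor i).obj M₁, t = 0 := by
    intro M₀ hM₀ M₁ hM₁ i h1 h2
    exact (vanish_iff Se i M₀ M₁).mp
      (fun f => hCT.hom_vanish M₁ M₀ hM₁ hM₀ i h1 (by omega) f)
  refine ⟨?_, ?_, ?_, ?_⟩
  · -- contra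
    intro Y
    obtain ⟨Z₀, Z₁, W, u₀, v₀, w₀, hZ₀, htri, hchain, hW⟩ := hCT.res Y
    have hT₀ := (mem_Ldist Se dist L hL u₀ v₀ w₀).mp htri
    have hw₀ : w₀ = 0 := hZ₀.eq_zero_of_tgt w₀
    have rc := toRChain hchain
    rcases Nat.eq_zero_or_pos (d - 1) with h0 | hpos
    · rw [h0] at rc
      cases rc
      refine ⟨Z₁, v₀, hW, ?_⟩
      intro M' hM' g
      obtain ⟨h, hh⟩ := factor₁ Se dist hTS hT₀ g (by
        show g ≫ w₀ = 0
        rw [hw₀, comp_zero])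
      exact ⟨h, hh⟩
    · obtain ⟨c, hcs⟩ : ∃ c, d - 1 = c + 1 := ⟨d - 2, by omega⟩
      rw [hcs] at rc
      cases rc with
      | @cons _ _ B₁ _ M₁ hM₁ u₁ v₁ w₁ ht₁ hc₁ =>
        have hT₁ := (mem_Ldist Se dist L hL u₁ v₁ w₁).mp ht₁
        refine ⟨M₁, w₁ ≫ v₀, hM₁, ?_⟩
        intro M' hM' g
        obtain ⟨h, hh⟩ := factor₁ Se dist hTS hT₀ g (by
          show g ≫ w₀ = 0
          rw [hw₀, comp_zero])
        have hzero : h ≫ ((Se.counitIso.app Z₁).inv ≫ Se.functor.map u₁) = 0 :=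
          VAN2 Se dist L hTS hL X d M' (fun M'' hM'' i h1 h2 => hXX M' hM' M'' hM'' i h1 h2)
            hc₁ hW 1 le_rfl (by omega) _
        obtain ⟨σ, hσ⟩ := factor₂ Se dist hTS hT₁ h hzero
        exact ⟨σ, by rw [← Category.assoc, hσ, hh]⟩
  · -- cova
    intro Y
    obtain ⟨Z₀, hZ₀, hchain⟩ := hCT.cores Y
    obtain ⟨m, hm⟩ : ∃ m, d = m + 1 := ⟨d - 1, by omega⟩
    rw [hm] at hchain
    cases hchain with
    | @succ _ _ B _ M hc hM u v w ht =>
      have hT := (mem_Ldist Se dist L hL u v w).mp ht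
      refine ⟨M, v, hM, ?_⟩
      intro M' hM' g
      have hUT := unrotate_tri Se dist hTS hT
      have hall : ∀ x : Se.inverse.obj B ⟶ M', x = 0 := by
        apply (one_step Se B M').mpr
        intro g'
        exact VAN3 Se dist L hTS hL X d M'
          (fun i h1 h2 M'' hM'' => hXX M'' hM'' M' hM' i h1 h2) hc hZ₀ 1 le_rfl (by omega) g'
      obtain ⟨ψ, hψ⟩ := cofactor Se dist hTS hUT g (hall _)
      exact ⟨ψ, hψ⟩
  · -- eq_left
    apply Set.Subset.antisymm
    · intro E hE
      intro M' hM' i h1 h2 f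
      exact hXX E hE M' hM' i h1 (by omega) f
    · intro E hE
      simp only [Set.mem_setOf_eq] at hE
      obtain ⟨Z₀, Z₁, W, u₀, v₀, w₀, hZ₀, htri, hchain, hW⟩ := hCT.res E
      have hT₀ := (mem_Ldist Se dist L hL u₀ v₀ w₀).mp htri
      have hw₀ : w₀ = 0 := hZ₀.eq_zero_of_tgt w₀
      obtain ⟨s, hs⟩ := factor₁ Se dist hTS hT₀ (𝟙 E) (by
        show 𝟙 E ≫ w₀ = 0
        rw [Category.id_comp, hw₀])
      have rc := toRChain hchain
      rcases Nat.eq_zero_or_pos (d - 1) with h0 | hpos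
      · rw [h0] at rc
        cases rc
        exact hCT.summand_closed hW s v₀ hs
      · obtain ⟨c, hcs⟩ : ∃ c, d - 1 = c + 1 := ⟨d - 2, by omega⟩
        rw [hcs] at rc
        cases rc with
        | @cons _ _ B₁ _ M₁ hM₁ u₁ v₁ w₁ ht₁ hc₁ =>
          have hT₁ := (mem_Ldist Se dist L hL u₁ v₁ w₁).mp ht₁
          have hzero : s ≫ ((Se.counitIso.app Z₁).inv ≫ Se.functor.map u₁) = 0 :=
            VAN2 Se dist L hTS hL X d E (fun M'' hM'' i h1 h2 => hE M'' hM'' i h1 (by omega))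
              hc₁ hW 1 le_rfl (by omega) _
          obtain ⟨σ, hσ⟩ := factor₂ Se dist hTS hT₁ s hzero
          exact hCT.summand_closed hM₁ σ (w₁ ≫ v₀) (by rw [← Category.assoc, hσ, hs])
  · -- eq_right
    apply Set.Subset.antisymm
    · intro E hE
      intro M' hM' i h1 h2 f
      exact (vanish_iff Se i M' E).mp
        (fun f' => hCT.hom_vanish E M' hE hM' i h1 h2 f') f
    · intro E hE
      simp only [Set.mem_setOf_eq] at hE
      obtain ⟨Z₀, hZ₀, hchain⟩ := hCT.cores E
      obtain ⟨m, hm⟩ : ∃ m, d = m + 1 := ⟨d - 1, by omega⟩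
      rw [hm] at hchain
      cases hchain with
      | @succ _ _ B _ M hc hM u v w ht =>
        have hT := (mem_Ldist Se dist L hL u v w).mp ht
        have hc0 : (Se.counitIso.app B).inv ≫ Se.functor.map u = 0 :=
          VAN3 Se dist L hTS hL X d E
            (fun i h1 h2 M'' hM'' => hE M'' hM'' i h1 (by omega)) hc hZ₀ 1 le_rfl (by omega) _
        obtain ⟨r, hr⟩ := split_of_m₃_zero Se dist hTS hT hc0
        exact hCT.summand_closed hM v r hr


theorem coresAux [HasBinaryBiproducts T] (hTS : TriangStructOn T Se dist)
    (hL : L.dist = {Tr : LTTriangle T Se.inverse |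
      Tri.mk Tr.obj₁ Tr.obj₂ Tr.obj₃ Tr.m₁ Tr.m₂
        ((Se.counitIso.app Tr.obj₃).inv ≫ Se.functor.map Tr.m₀) ∈ dist})
    (X : Set T) (d : ℕ) (hd : 0 < d) (hCT : ClusterTiltingTri T Se.functor X d)
    (hXX' : ∀ M₀ ∈ X, ∀ M₁ ∈ X, ∀ i : ℕ, 1 ≤ i → i + 1 ≤ d →
      ∀ t : M₀ ⟶ (fpow Se.functor i).obj M₁, t = 0) :
    ∀ m : ℕ, m + 1 ≤ d → ∀ B : T,
      (∀ M' ∈ X, ∀ i : ℕ, 1 ≤ i → i + m + 1 ≤ d →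
        ∀ t : B ⟶ (fpow Se.functor i).obj M', t = 0) →
      ∃ Z₀ : T, IsZero Z₀ ∧ LTChain L X (m + 1) Z₀ B := by
  intro m
  induction m with
  | zero =>
    intro _ B hB
    have hBX : B ∈ X := by
      rw [hCT.eq_left]
      intro M' hM' i h1 h2 f
      exact hB M' hM' i h1 (by omega) f
    exact ⟨0, isZero_zero T, LTChain.succ (LTChain.zero 0) hBX 0 (𝟙 B) 0 (L.contractible B)⟩
  | succ m ih =>
    intro hm B hB
    obtain ⟨M₀, f, hM₀, happ⟩ := hCT.cova B
    obtain ⟨Q, g, w, hT⟩ := hTS.complete f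
    have hLT : LTTriangle.mk B M₀ Q (lowerHom Se w) f g ∈ L.dist := by
      apply (mem_Ldist Se dist L hL _ _ _).mpr
      rw [counitInv_comp_map_lower]
      exact hT
    have hQ : ∀ M' ∈ X, ∀ i : ℕ, 1 ≤ i → i + m + 1 ≤ d →
        ∀ φ : Q ⟶ (fpow Se.functor i).obj M', φ = 0 := by
      intro M' hM' i h1 h2 φ
      have hrot := hTS.rotate _ hT
      have hgφ : g ≫ φ = 0 := hXX' M₀ hM₀ M' hM' i h1 (by omega) _
      obtain ⟨ψ, hψ⟩ := cofactor Se dist hTS hrot φ hgφ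
      obtain ⟨i', rfl⟩ : ∃ i', i = i' + 1 := ⟨i - 1, by omega⟩
      have hψ' : ψ = Se.functor.map (Se.functor.preimage
          (ψ : Se.functor.obj B ⟶ Se.functor.obj ((fpow Se.functor i').obj M'))) :=
        (Se.functor.map_preimage _).symm
      rcases Nat.eq_zero_or_pos i' with h0 | hpos
      · subst h0
        obtain ⟨h', hh'⟩ := happ M' hM' (Se.functor.preimage
          (ψ : Se.functor.obj B ⟶ Se.functor.obj ((fpow Se.functor 0).obj M')))
        have hwf : w ≫ Se.functor.map f = 0 := by
          have h2 := tri_comp₁₂ Se dist hTS (hTS.rotate _ (hTS.rotate _ hT))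
          simpa [Preadditive.comp_neg, neg_eq_zero] using h2
        rw [← hψ, hψ']
        erw [← hh']
        exact (congrArg (fun x => w ≫ x) (Se.functor.map_comp f h')).trans
          ((Category.assoc _ _ _).symm.trans ((congrArg (fun x => x ≫ Se.functor.map h') hwf).trans zero_comp))
      · have hp0 : Se.functor.preimage
            (ψ : Se.functor.obj B ⟶ Se.functor.obj ((fpow Se.functor i').obj M')) = 0 :=
          hB M' hM' i' (by omega) (by omega) _
        rw [← hψ, hψ', hp0, fmap_zero]
        exact comp_zero
    obtain ⟨Z₀, hZ₀, chainQ⟩ := ih (by omega) Q hQ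
    exact ⟨Z₀, hZ₀, LTChain.succ chainQ hM₀ (lowerHom Se w) f g hLT⟩

theorem resAux [HasBinaryBiproducts T] (hTS : TriangStructOn T Se dist)
    (hL : L.dist = {Tr : LTTriangle T Se.inverse |
      Tri.mk Tr.obj₁ Tr.obj₂ Tr.obj₃ Tr.m₁ Tr.m₂
        ((Se.counitIso.app Tr.obj₃).inv ≫ Se.functor.map Tr.m₀) ∈ dist})
    (X : Set T) (d : ℕ) (hd : 0 < d) (hCT : ClusterTiltingTri T Se.functor X d)
    (hXX' : ∀ M₀ ∈ X, ∀ M₁ ∈ X, ∀ i : ℕ, 1 ≤ i → i + 1 ≤ d →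
      ∀ t : M₀ ⟶ (fpow Se.functor i).obj M₁, t = 0) :
    ∀ c : ℕ, ∀ B : T,
      (∀ M' ∈ X, ∀ i : ℕ, 1 ≤ i → i + c + 1 ≤ d →
        ∀ t : M' ⟶ (fpow Se.functor i).obj B, t = 0) →
      ∃ W, RChain L X c B W ∧ W ∈ X := by
  intro c
  induction c with
  | zero =>
    intro B hB
    refine ⟨B, RChain.zero B, ?_⟩
    rw [hCT.eq_right]
    intro M' hM' i h1 h2 f
    exact hB M' hM' i h1 (by omega) f
  | succ c ih =>
    intro B hB
    obtain ⟨M₀, w, hM₀, happ⟩ := hCT.contra B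
    obtain ⟨Q, q, r, hT⟩ := hTS.complete w
    have hUT := unrotate_tri Se dist hTS hT
    have hLT : LTTriangle.mk (Se.inverse.obj Q) M₀ B
        (lowerHom Se (q ≫ (Se.counitIso.app Q).inv)) (lowerHom Se (-r)) w ∈ L.dist := by
      apply (mem_Ldist Se dist L hL _ _ _).mpr
      rw [counitInv_comp_map_lower]
      exact hUT
    have hB' : ∀ M' ∈ X, ∀ i : ℕ, 1 ≤ i → i + c + 1 ≤ d →
        ∀ t : M' ⟶ (fpow Se.functor i).obj (Se.inverse.obj Q), t = 0 := by
      intro M' hM' i h1 h2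
      obtain ⟨i', rfl⟩ : ∃ i', i = i' + 1 := ⟨i - 1, by omega⟩
      have key : (fpow Se.functor (i' + 1)).obj (Se.inverse.obj Q) =
          (fpow Se.functor i').obj (Se.functor.obj (Se.inverse.obj Q)) :=
        Functor.congr_obj (fpow_comp_comm Se.functor i') _
      rw [key]
      refine (vanish_iff Se i' M' _).mp ?_
      intro t'
      have hrot := hTS.rotate _ hUT
      have hallM₀ : ∀ x : (fpow Se.inverse i').obj M' ⟶ Se.functor.obj M₀, x = 0 := by
        refine (vanish_iff Se i' M' (Se.functor.obj M₀)).mpr ?_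
        have key2 : (fpow Se.functor (i' + 1)).obj M₀ =
            (fpow Se.functor i').obj (Se.functor.obj M₀) :=
          Functor.congr_obj (fpow_comp_comm Se.functor i') M₀
        rw [← key2]
        exact fun t => hXX' M' hM' M₀ hM₀ (i' + 1) (by omega) (by omega) t
      have hcond : t' ≫ (-(Se.functor.map (lowerHom Se (-r)))) = 0 := by
        have hz := hallM₀ (t' ≫ Se.functor.map (lowerHom Se (-r)))
        rw [Preadditive.comp_neg, hz, neg_zero]
      obtain ⟨s, hs⟩ := factor₂ Se dist hTS hrot t' hcond
      rcases Nat.eq_zero_or_pos i' with h0 | hpos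
      · subst h0
        obtain ⟨σ, hσ⟩ := happ M' hM' s
        have hwq : w ≫ q = 0 := tri_comp₁₂ Se dist hTS hT
        have hz : w ≫ q ≫ (Se.counitIso.app Q).inv = 0 := by
          rw [← Category.assoc, hwq, zero_comp]
        rw [← hs, ← hσ]
        exact (Category.assoc _ _ _).trans ((congrArg (fun x => σ ≫ x) hz).trans comp_zero)
      · have hallB : ∀ x : (fpow Se.inverse i').obj M' ⟶ B, x = 0 :=
          (vanish_iff Se i' M' B).mpr (fun g => hB M' hM' i' (by omega) (by omega) g)
        rw [← hs, hallB s, zero_comp]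
    obtain ⟨W, rc, hW⟩ := ih (Se.inverse.obj Q) hB'
    exact ⟨W, RChain.cons hM₀ (lowerHom Se (q ≫ (Se.counitIso.app Q).inv))
      (lowerHom Se (-r)) w hLT rc, hW⟩

theorem backward_dir [HasBinaryBiproducts T] (hTS : TriangStructOn T Se dist)
    (hL : L.dist = {Tr : LTTriangle T Se.inverse |
      Tri.mk Tr.obj₁ Tr.obj₂ Tr.obj₃ Tr.m₁ Tr.m₂
        ((Se.counitIso.app Tr.obj₃).inv ≫ Se.functor.map Tr.m₀) ∈ dist})
    (X : Set T) (d : ℕ) (hd : 0 < d) (hCT : ClusterTiltingTri T Se.functor X d) :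
    ClusterTiltingLT L X d := by
  have hXX' : ∀ M₀ ∈ X, ∀ M₁ ∈ X, ∀ i : ℕ, 1 ≤ i → i + 1 ≤ d →
      ∀ t : M₀ ⟶ (fpow Se.functor i).obj M₁, t = 0 := by
    intro M₀ hM₀ M₁ hM₁ i h1 h2 t
    rw [hCT.eq_left] at hM₀
    exact hM₀ M₁ hM₁ i h1 h2 t
  refine ⟨?_, ?_, ?_, ?_, ?_⟩
  · -- summand_closed
    intro A Z hZ s r hsr
    rw [hCT.eq_left]
    intro M' hM' i h1 h2 f
    have hZ' := hZ
    rw [hCT.eq_left] at hZ'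
    have hrf : r ≫ f = 0 := hZ' M' hM' i h1 h2 (r ≫ f)
    calc f = (s ≫ r) ≫ f := by rw [hsr, Category.id_comp]
      _ = s ≫ (r ≫ f) := Category.assoc _ _ _
      _ = 0 := by rw [hrf, comp_zero]
  · -- cores
    intro C
    obtain ⟨Z₀, hZ₀, hc⟩ := coresAux Se dist L hTS hL X d hd hCT hXX' (d - 1) (by omega) C
      (fun M' hM' i h1 h2 t => absurd h2 (by omega))
    have e : d - 1 + 1 = d := by omega
    rw [e] at hc
    exact ⟨Z₀, hZ₀, hc⟩
  · -- res
    intro C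
    obtain ⟨W, rc, hW⟩ := resAux Se dist L hTS hL X d hd hCT hXX' (d - 1) C
      (fun M' hM' i h1 h2 t => absurd h2 (by omega))
    exact ⟨0, C, W, 0, 𝟙 C, 0, isZero_zero T, L.contractible C, ofRChain rc, hW⟩
  · -- om_bij
    intro C X₀ hX₀ i hi
    exact ⟨fun f g h => Se.inverse.map_injective h,
      fun y => ⟨Se.inverse.preimage y, Se.inverse.map_preimage y⟩⟩
  · -- hom_vanish
    intro X₀ X₁ hX₀ hX₁ i h1 h2 f
    exact (vanish_iff Se i X₁ X₀).mpr (fun g => hXX' X₁ hX₁ X₀ hX₀ i h1 h2 g) f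

end AuxStatement10

/-- Proposition 5.2. For a triangulated category regarded as a left
triangulated category with `Ω = Σ⁻¹`, a full subcategory is `d`-cluster tilting in the
left triangulated sense iff it is `d`-cluster tilting in the usual triangulated
sense. -/
theorem statement10 {T : Type w} [Category.{w'} T] [Preadditive T] [HasZeroObject T]
    [HasBinaryBiproducts T] (Se : T ≌ T) (dist : Set (Tri T Se.functor))
    (hTS : TriangStructOn T Se dist) (L : LeftTriangStruct T Se.inverse)
    (hL : L.dist = {Tr : LTTriangle T Se.inverse |
      Tri.mk Tr.obj₁ Tr.obj₂ Tr.obj₃ Tr.m₁ Tr.m₂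
        ((Se.counitIso.app Tr.obj₃).inv ≫ Se.functor.map Tr.m₀) ∈ dist})
    (X : Set T) (d : ℕ) (hd : 0 < d) :
    ClusterTiltingLT L X d ↔ ClusterTiltingTri T Se.functor X d :=
  ⟨fun h => forward_dir Se dist L hTS hL X d hd h,
   fun h => backward_dir Se dist L hTS hL X d hd h⟩

end Paper
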